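/- (Second uniqueness theorem) Let A be a commutative noetherian ring and M a finitely generated A-module. Suppose N₁, ..., N_t are submodules of M with N₁ ∩ ... ∩ N_t = 0, each quotient M/N_i is primary with set of associated primes equal to the singleton {p_i}, and the primes p₁, ..., p_t are pairwise distinct. If p_j is a minimal element of the set of associated primes of M (no associated prime of M is strictly contained in p_j), then N_j = {m ∈ M | s•m = 0 for some s ∈ A \ p_j}, i.e. N_j is the kernel of the localization map M → M_{p_j} and is therefore uniquely determined by M. -/

import Mathlib

/-- An `A`-module `Q` is primary if every zero divisor of `Q` lies in the radical of
the annihilator of `Q`. -/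
def IsPrimaryModule (A : Type*) [CommRing A] (Q : Type*) [AddCommGroup Q] [Module A Q] : Prop :=
  ∀ (a : A) (x : Q), a • x = 0 → x ≠ 0 → a ∈ (Module.annihilator A Q).radical

/-- If `Q` is a primary module and `p` is an associated prime of `Q`, then
`p` equals the radical of the annihilator of `Q`. -/
lemma IsPrimaryModule.radical_annihilator_eq {A : Type*} [CommRing A]
    {Q : Type*} [AddCommGroup Q] [Module A Q]
    (hprim : IsPrimaryModule A Q) {p : Ideal A} (hp : p ∈ associatedPrimes A Q) :
    (Module.annihilator A Q).radical = p := by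
  obtain ⟨hp1, x, hx⟩ := hp
  have hx0 : x ≠ 0 := by
    rintro rfl
    apply hp1.ne_top
    rw [hx, Ideal.radical_eq_top, Ideal.eq_top_iff_one, Submodule.mem_colon_singleton, smul_zero]
    exact Submodule.zero_mem _
  apply le_antisymm
  · have hle : Module.annihilator A Q ≤ p := by
      rw [hx]
      intro a ha
      apply Ideal.le_radical
      rw [Submodule.mem_colon_singleton, Submodule.mem_bot]
      exact Module.mem_annihilator.mp ha x
    calc (Module.annihilator A Q).radical ≤ p.radical := Ideal.radical_mono hle
      _ = p := hp1.radical
  · intro a ha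
    rw [hx] at ha
    obtain ⟨n, hn⟩ := ha
    rw [Submodule.mem_colon_singleton, Submodule.mem_bot] at hn
    obtain ⟨k, hk⟩ := hprim _ x hn hx0
    exact ⟨n * k, by rwa [pow_mul]⟩

/-- Over a noetherian ring, any prime containing the annihilator of a finitely
generated module contains an associated prime of the module. -/
lemma exists_associatedPrime_le {A : Type*} [CommRing A] [IsNoetherianRing A]
    {M : Type*} [AddCommGroup M] [Module A M] [Module.Finite A M]
    {q : Ideal A} (hq : q.IsPrime) (hann : Module.annihilator A M ≤ q) :
    ∃ P ∈ associatedPrimes A M, P ≤ q := by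
  classical
  -- the kernel of the localization map `M → M_q`
  let K : Submodule A M :=
    { carrier := {m | ∃ s ∉ q, s • m = 0}
      add_mem' := by
        rintro a b ⟨s, hs, hsa⟩ ⟨u, hu, hub⟩
        refine ⟨s * u, fun h => (hq.mem_or_mem h).elim hs hu, ?_⟩
        have h1 : (s * u) • a = 0 := by rw [mul_comm, mul_smul, hsa, smul_zero]
        have h2 : (s * u) • b = 0 := by rw [mul_smul, hub, smul_zero]
        rw [smul_add, h1, h2, add_zero]
      zero_mem' := ⟨1, fun h => hq.ne_top (q.eq_top_iff_one.mpr h), smul_zero 1⟩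
      smul_mem' := by
        rintro c a ⟨s, hs, hsa⟩
        exact ⟨s, hs, by rw [smul_comm, hsa, smul_zero]⟩ }
  have memK : ∀ m : M, m ∈ K ↔ ∃ s ∉ q, s • m = 0 := fun m => Iff.rfl
  -- there is an element not in `K`
  have hKne : ∃ x : M, x ∉ K := by
    by_contra h
    push_neg at h
    choose f hf1 hf2 using fun x : M => (memK x).mp (h x)
    obtain ⟨S, hS⟩ : (⊤ : Submodule A M).FG := Module.Finite.fg_top
    set s : A := ∏ x ∈ S, f x with hsdef
    have hsq : s ∉ q := by
      intro hmem
      obtain ⟨x, _, hx⟩ := (Ideal.IsPrime.prod_mem_iff (hp := hq)).mp hmem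
      exact hf1 x hx
    apply hsq
    apply hann
    rw [Module.mem_annihilator]
    intro m
    have hm : m ∈ Submodule.span A (S : Set M) := hS ▸ Submodule.mem_top
    induction hm using Submodule.span_induction with
    | mem x hx =>
        obtain ⟨c, hc⟩ := Finset.dvd_prod_of_mem f hx
        rw [hsdef, hc, mul_comm, mul_smul, hf2, smul_zero]
    | zero => rw [smul_zero]
    | add x y _ _ hx hy => rw [smul_add, hx, hy, add_zero]
    | smul c x _ hx => rw [smul_comm, hx, smul_zero]
  obtain ⟨x, hx⟩ := hKne
  have hx0 : (Submodule.Quotient.mk x : M ⧸ K) ≠ 0 := by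
    rwa [Ne, Submodule.Quotient.mk_eq_zero]
  obtain ⟨P, hP, -⟩ :=
    exists_le_isAssociatedPrime_of_isNoetherianRing A (Submodule.Quotient.mk x : M ⧸ K) hx0
  obtain ⟨hP1, y, hy⟩ := isAssociatedPrime_iff.mp hP
  obtain ⟨y, rfl⟩ := Submodule.Quotient.mk_surjective K y
  have hy0 : y ∉ K := by
    intro h
    apply hP1.ne_top
    rw [hy, Ideal.eq_top_iff_one, Submodule.mem_colon_singleton, one_smul, Submodule.mem_bot,
      Submodule.Quotient.mk_eq_zero]
    exact h
  -- `P ≤ q`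
  have hPq : P ≤ q := by
    intro a ha
    rw [hy, Submodule.mem_colon_singleton, Submodule.mem_bot, ← Submodule.Quotient.mk_smul,
      Submodule.Quotient.mk_eq_zero] at ha
    obtain ⟨s, hs, hsay⟩ := (memK _).mp ha
    by_contra haq
    apply hy0
    refine (memK y).mpr ⟨s * a, fun h => (hq.mem_or_mem h).elim hs haq, ?_⟩
    rwa [mul_smul]
  -- lift `P` to an associated prime of `M`
  obtain ⟨T, hT⟩ : P.FG := IsNoetherian.noetherian P
  have hTy : ∀ a : T, ∃ s ∉ q, s • ((a : A) • y) = 0 := by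
    rintro ⟨a, ha⟩
    have haP : a ∈ P := hT ▸ Ideal.subset_span ha
    rw [hy, Submodule.mem_colon_singleton, Submodule.mem_bot, ← Submodule.Quotient.mk_smul,
      Submodule.Quotient.mk_eq_zero] at haP
    exact (memK _).mp haP
  choose g hg1 hg2 using hTy
  set s : A := ∏ a : T, g a with hsdef
  have hsq : s ∉ q := by
    intro hmem
    obtain ⟨a, _, ha⟩ := (Ideal.IsPrime.prod_mem_iff (hp := hq)).mp hmem
    exact hg1 a ha
  refine ⟨P, AssociatedPrimes.mem_iff.mpr (isAssociatedPrime_iff.mpr ⟨hP1, s • y, ?_⟩), hPq⟩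
  ext a
  rw [Submodule.mem_colon_singleton, Submodule.mem_bot]
  constructor
  · intro haP
    rw [← hT] at haP
    induction haP using Submodule.span_induction with
    | mem b hb =>
        obtain ⟨c, hc⟩ := Finset.dvd_prod_of_mem g (Finset.mem_univ (⟨b, hb⟩ : T))
        rw [smul_comm, hsdef, hc, mul_comm, mul_smul, hg2, smul_zero]
    | zero => rw [zero_smul]
    | add u v _ _ hu hv => rw [add_smul, hu, hv, add_zero]
    | smul c u _ hu => rw [smul_eq_mul, mul_smul, hu, smul_zero]
  · intro haz
    have : (a * s) • y = 0 := by rwa [mul_smul]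
    have hasP : a * s ∈ P := by
      rw [hy, Submodule.mem_colon_singleton, Submodule.mem_bot, ← Submodule.Quotient.mk_smul, this,
        Submodule.Quotient.mk_zero]
    exact (hP1.mem_or_mem hasP).resolve_right fun h => hsq (hPq h)

/-- (Second uniqueness theorem) Over a commutative noetherian ring, if
`N₁ ∩ … ∩ N_t = 0` in a finitely generated module `M`, where each `M ⧸ Nᵢ` is primary
with single associated prime `pᵢ` and the `pᵢ` are pairwise distinct, and if `p_j` is a
minimal element of `ass(M)`, then `N_j` is the kernel of the localization map
`M → M_{p_j}`, i.e. `N_j = {m ∈ M | s • m = 0 for some s ∉ p_j}`; in particular `N_j`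
is uniquely determined by `M`. -/
theorem primary_component_of_minimal_prime_eq_localization_kernel
    {A : Type*} [CommRing A] [IsNoetherianRing A]
    {M : Type*} [AddCommGroup M] [Module A M] [Module.Finite A M]
    (t : ℕ) (N : Fin t → Submodule A M) (p : Fin t → Ideal A)
    (hinf : (⨅ i, N i) = ⊥)
    (hprim : ∀ i, IsPrimaryModule A (M ⧸ N i))
    (hass : ∀ i, associatedPrimes A (M ⧸ N i) = {p i})
    (hdist : Function.Injective p)
    (j : Fin t) (hmem : p j ∈ associatedPrimes A M)
    (hmin : ∀ q ∈ associatedPrimes A M, ¬ q < p j) :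
    ∀ m : M, m ∈ N j ↔ ∃ s ∉ p j, s • m = 0 := by
  classical
  have hpmem : ∀ i, p i ∈ associatedPrimes A (M ⧸ N i) := by
    intro i; rw [hass i]; rfl
  have hrad : ∀ i, (Module.annihilator A (M ⧸ N i)).radical = p i := fun i =>
    (hprim i).radical_annihilator_eq (hpmem i)
  have hprime : ∀ i, (p i).IsPrime := fun i => (hpmem i).1
  intro m
  constructor
  · intro hm
    have key : ∀ i : Fin t, ∃ s, s ∉ p j ∧ s • m ∈ N i := by
      intro i
      by_cases hij : i = j
      · subst hij
        exact ⟨1, fun h => (hprime i).ne_top ((p i).eq_top_iff_one.mpr h),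
          by simpa using hm⟩
      · have hne : ¬ p i ≤ p j := by
          intro hle
          have hannle : Module.annihilator A M ≤ p i := by
            refine le_trans ?_ ((hrad i) ▸ Ideal.le_radical)
            intro a ha
            rw [Module.mem_annihilator] at ha ⊢
            intro x
            obtain ⟨x, rfl⟩ := Submodule.Quotient.mk_surjective _ x
            rw [← Submodule.Quotient.mk_smul, ha, Submodule.Quotient.mk_zero]
          obtain ⟨P, hP, hPle⟩ := exists_associatedPrime_le (hprime i) hannle
          have hPj : P = p j := by
            rcases lt_or_eq_of_le (hPle.trans hle) with h | h
            · exact absurd h (hmin P hP)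
            · exact h
          exact hij (hdist (le_antisymm hle (hPj ▸ hPle)))
        obtain ⟨s, hsp, hsn⟩ := SetLike.not_le_iff_exists.mp hne
        rw [← hrad i, Ideal.mem_radical_iff] at hsp
        obtain ⟨n, hn⟩ := hsp
        refine ⟨s ^ n, fun h => hsn ((hprime j).mem_of_pow_mem n h), ?_⟩
        have : (s ^ n) • (Submodule.Quotient.mk m : M ⧸ N i) = 0 :=
          Module.mem_annihilator.mp hn _
        rwa [← Submodule.Quotient.mk_smul, Submodule.Quotient.mk_eq_zero] at this
    choose f hf1 hf2 using key
    refine ⟨∏ i, f i, ?_, ?_⟩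
    · intro h
      obtain ⟨i, _, hi⟩ := (Ideal.IsPrime.prod_mem_iff (hp := hprime j)).mp h
      exact hf1 i hi
    · have hmem' : (∏ i, f i) • m ∈ ⨅ i, N i := by
        rw [Submodule.mem_iInf]
        intro i
        rw [← Finset.prod_erase_mul Finset.univ f (Finset.mem_univ i), mul_smul]
        exact Submodule.smul_mem _ _ (hf2 i)
      rwa [hinf, Submodule.mem_bot] at hmem'
  · rintro ⟨s, hs, hsm⟩
    by_contra hm
    have h1 : (Submodule.Quotient.mk m : M ⧸ N j) ≠ 0 := by
      rwa [Ne, Submodule.Quotient.mk_eq_zero]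
    have h2 : s • (Submodule.Quotient.mk m : M ⧸ N j) = 0 := by
      rw [← Submodule.Quotient.mk_smul, hsm, Submodule.Quotient.mk_zero]
    have h3 := hprim j s _ h2 h1
    rw [hrad j] at h3
    exact hs h3
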